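/- Let σ ≥ 1 be a real number and let u, v : [0,1] → ℂ be continuously differentiable. Then ∫₀¹ | |u(x)|^{2σ}u(x) − |v(x)|^{2σ}v(x) |² dx ≤ 2^{2σ+1}(4σ−1)² · ( (∫₀¹ |u(x)|² + |u'(x)|² dx)^{2σ} + (∫₀¹ |v(x)|² + |v'(x)|² dx)^{2σ} ) · ∫₀¹ |u(x) − v(x)|² dx. -/

import Mathlib

open MeasureTheory intervalIntegral

lemma my_rpow_sub_rpow_le {β s t : ℝ} (hβ : 1 ≤ β) (ht : 0 ≤ t) (hts : t ≤ s) :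
    s ^ β - t ^ β ≤ β * s ^ (β - 1) * (s - t) := by
  rcases eq_or_lt_of_le (ht.trans hts) with hs | hs
  · have h1 : t = 0 := le_antisymm (hts.trans_eq hs.symm) ht
    have h2 : s = 0 := hs.symm
    subst h1; subst h2
    rw [Real.zero_rpow (by linarith : β ≠ 0)]
    simp
  · have key := one_add_mul_self_le_rpow_one_add (s := t / s - 1) (by
      have : 0 ≤ t / s := div_nonneg ht hs.le
      linarith) hβ
    have h0 : (1 : ℝ) + (t / s - 1) = t / s := by ring
    rw [h0] at key
    have hsβ : (0:ℝ) < s ^ β := Real.rpow_pos_of_pos hs β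
    have hmul : (t / s) ^ β * s ^ β = t ^ β := by
      rw [← Real.mul_rpow (div_nonneg ht hs.le) hs.le, div_mul_cancel₀ _ hs.ne']
    have h3 : s ^ β * (t / s - 1) = s ^ (β - 1) * (t - s) := by
      rw [Real.rpow_sub_one hs.ne']
      field_simp
    nlinarith [mul_le_mul_of_nonneg_right key hsβ.le]

-- helper, assuming |b| ≤ |a|
lemma ptwise_aux {β : ℝ} (hβ : 1 ≤ β) (a b : ℂ) (hba : ‖b‖ ≤ ‖a‖) :
    ‖(‖a‖ ^ β : ℝ) * a - (‖b‖ ^ β : ℝ) * b‖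
      ≤ (β + 1) * ‖a‖ ^ β * ‖a - b‖ := by
  rcases eq_or_lt_of_le ((norm_nonneg b).trans hba) with ha | ha
  · have hb0 : b = 0 := by
      have := le_antisymm (hba.trans_eq ha.symm) (norm_nonneg b)
      exact norm_eq_zero.mp this
    have ha0 : a = 0 := norm_eq_zero.mp ha.symm
    subst ha0; subst hb0; simp
  · have key : (‖a‖ ^ β : ℝ) * a - (‖b‖ ^ β : ℝ) * b
        = (‖a‖ ^ β : ℝ) * (a - b) + ((‖a‖ ^ β - ‖b‖ ^ β : ℝ)) * b := by
      push_cast; ring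
    rw [key]
    have h1 : ‖(‖a‖ ^ β : ℝ) * (a - b)‖
        = ‖a‖ ^ β * ‖a - b‖ := by
      rw [norm_mul, Complex.norm_real, Real.norm_eq_abs, abs_of_nonneg (Real.rpow_nonneg (norm_nonneg a) β)]
    have hd : ‖a‖ ^ β - ‖b‖ ^ β
        ≤ β * ‖a‖ ^ (β - 1) * ‖a - b‖ := by
      have := my_rpow_sub_rpow_le hβ (norm_nonneg b) hba
      refine this.trans ?_
      have habs : ‖a‖ - ‖b‖ ≤ ‖a - b‖ := by
        have := abs_norm_sub_norm_le a b
        have := abs_le.mp this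
        linarith [this.2]
      have h2 : ‖a‖ - ‖b‖ ≤ ‖a - b‖ := habs
      have hpos : (0:ℝ) ≤ β * ‖a‖ ^ (β - 1) :=
        mul_nonneg (by linarith) (Real.rpow_nonneg (norm_nonneg a) _)
      exact mul_le_mul_of_nonneg_left h2 hpos
    have h2 : ‖((‖a‖ ^ β - ‖b‖ ^ β : ℝ)) * b‖
        ≤ β * ‖a‖ ^ β * ‖a - b‖ := by
      rw [norm_mul, Complex.norm_real, Real.norm_eq_abs]
      have hnn : 0 ≤ ‖a‖ ^ β - ‖b‖ ^ β := by
        have := Real.rpow_le_rpow (norm_nonneg b) hba (by linarith : (0:ℝ) ≤ β)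
        linarith
      rw [abs_of_nonneg hnn]
      calc (‖a‖ ^ β - ‖b‖ ^ β) * ‖b‖
          ≤ (β * ‖a‖ ^ (β - 1) * ‖a - b‖) * ‖a‖ := by
            apply mul_le_mul hd hba (norm_nonneg b)
            positivity
        _ = β * (‖a‖ ^ (β - 1) * ‖a‖) * ‖a - b‖ := by ring
        _ = β * ‖a‖ ^ β * ‖a - b‖ := by
            rw [← Real.rpow_add_one ha.ne' (β - 1)]
            ring_nf
    calc ‖(‖a‖ ^ β : ℝ) * (a - b) + ((‖a‖ ^ β - ‖b‖ ^ β : ℝ)) * b‖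
        ≤ ‖(‖a‖ ^ β : ℝ) * (a - b)‖
          + ‖((‖a‖ ^ β - ‖b‖ ^ β : ℝ)) * b‖ := norm_add_le _ _
      _ ≤ ‖a‖ ^ β * ‖a - b‖ + β * ‖a‖ ^ β * ‖a - b‖ := by
          rw [h1]; exact add_le_add_right h2 _
      _ = (β + 1) * ‖a‖ ^ β * ‖a - b‖ := by ring

lemma ptwise {β : ℝ} (hβ : 1 ≤ β) (a b : ℂ) :
    ‖(‖a‖ ^ β : ℝ) * a - (‖b‖ ^ β : ℝ) * b‖
      ≤ (β + 1) * max (‖a‖) (‖b‖) ^ β * ‖a - b‖ := by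
  rcases le_total (‖b‖) (‖a‖) with h | h
  · rw [max_eq_left h]; exact ptwise_aux hβ a b h
  · rw [max_eq_right h]
    have h1 := ptwise_aux hβ b a h
    have e1 : ‖↑(‖a‖ ^ β) * a - ↑(‖b‖ ^ β) * b‖
        = ‖↑(‖b‖ ^ β) * b - ↑(‖a‖ ^ β) * a‖ := by
      rw [← norm_neg]; ring_nf
    have e2 : ‖a - b‖ = ‖b - a‖ := by
      rw [← norm_neg]; ring_nf
    rw [e1, e2]; exact h1

lemma sup_sq_le (w : ℝ → ℂ) (hw : ContDiffOn ℝ 1 w (Set.Icc (0:ℝ) 1)) {x : ℝ}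
    (hx : x ∈ Set.Icc (0:ℝ) 1) :
    ‖w x‖ ^ 2 ≤
      2 * ∫ t in (0:ℝ)..1,
        (‖w t‖ ^ 2 + ‖derivWithin w (Set.Icc (0:ℝ) 1) t‖ ^ 2) := by
  set D := derivWithin w (Set.Icc (0:ℝ) 1) with hD
  have huniq : UniqueDiffOn ℝ (Set.Icc (0:ℝ) 1) := uniqueDiffOn_Icc one_pos
  have hwc : ContinuousOn w (Set.Icc (0:ℝ) 1) := hw.continuousOn
  have hDc : ContinuousOn D (Set.Icc (0:ℝ) 1) := hw.continuousOn_derivWithin huniq le_rfl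
  set g : ℝ → ℝ := fun t => ‖w t‖ ^ 2 with hg
  set g' : ℝ → ℝ := fun t => 2 * ((w t).re * (D t).re + (w t).im * (D t).im) with hg'
  set h : ℝ → ℝ := fun t => ‖w t‖ ^ 2 + ‖D t‖ ^ 2 with hh
  -- continuity facts
  have hrec : ContinuousOn (fun t => (w t).re) (Set.Icc (0:ℝ) 1) :=
    Complex.continuous_re.comp_continuousOn hwc
  have himc : ContinuousOn (fun t => (w t).im) (Set.Icc (0:ℝ) 1) :=
    Complex.continuous_im.comp_continuousOn hwc
  have hDrec : ContinuousOn (fun t => (D t).re) (Set.Icc (0:ℝ) 1) :=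
    Complex.continuous_re.comp_continuousOn hDc
  have hDimc : ContinuousOn (fun t => (D t).im) (Set.Icc (0:ℝ) 1) :=
    Complex.continuous_im.comp_continuousOn hDc
  have hgc : ContinuousOn g (Set.Icc (0:ℝ) 1) := (continuous_norm.comp_continuousOn hwc).pow 2
  have hg'c : ContinuousOn g' (Set.Icc (0:ℝ) 1) := by
    apply ContinuousOn.mul continuousOn_const
    exact (hrec.mul hDrec).add (himc.mul hDimc)
  have hhc : ContinuousOn h (Set.Icc (0:ℝ) 1) :=
    ((continuous_norm.comp_continuousOn hwc).pow 2).add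
      ((continuous_norm.comp_continuousOn hDc).pow 2)
  -- bound |g'| ≤ h
  have hbound : ∀ t, |g' t| ≤ h t := by
    intro t
    have e1 : (w t).re * (D t).re + (w t).im * (D t).im = ((starRingEnd ℂ) (w t) * D t).re := by
      simp [Complex.mul_re]
    have e2 : |((starRingEnd ℂ) (w t) * D t).re| ≤ ‖w t‖ * ‖D t‖ := by
      calc |((starRingEnd ℂ) (w t) * D t).re| ≤ ‖(starRingEnd ℂ) (w t) * D t‖ :=
            Complex.abs_re_le_norm _
        _ = ‖w t‖ * ‖D t‖ := by rw [norm_mul, Complex.norm_conj]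
    have e3 : 2 * (‖w t‖ * ‖D t‖)
          ≤ ‖w t‖ ^ 2 + ‖D t‖ ^ 2 := by
      nlinarith [sq_nonneg (‖w t‖ - ‖D t‖)]
    calc |g' t| = 2 * |((starRingEnd ℂ) (w t) * D t).re| := by
          rw [hg']; simp only [abs_mul, abs_two, e1]
      _ ≤ 2 * (‖w t‖ * ‖D t‖) := by linarith [e2]
      _ ≤ h t := e3
  -- derivative of g within Icc 0 1
  have hderiv : ∀ t ∈ Set.Icc (0:ℝ) 1, HasDerivWithinAt g (g' t) (Set.Icc (0:ℝ) 1) t := by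
    intro t ht
    have hDw : HasDerivWithinAt w (D t) (Set.Icc (0:ℝ) 1) t :=
      (hw.differentiableOn one_ne_zero t ht).hasDerivWithinAt
    have hre : HasDerivWithinAt (fun s => (w s).re) ((D t).re) (Set.Icc (0:ℝ) 1) t := by
      have := (Complex.reCLM.hasFDerivAt (x := w t)).comp_hasDerivWithinAt t hDw
      exact this
    have him : HasDerivWithinAt (fun s => (w s).im) ((D t).im) (Set.Icc (0:ℝ) 1) t := by
      have := (Complex.imCLM.hasFDerivAt (x := w t)).comp_hasDerivWithinAt t hDw
      exact this
    have h1 : HasDerivWithinAt (fun s => (w s).re ^ 2 + (w s).im ^ 2)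
        (2 * (w t).re * (D t).re + 2 * (w t).im * (D t).im) (Set.Icc (0:ℝ) 1) t := by
      have := ((hre.mul hre).add (him.mul him))
      convert this using 1
      · rfl
      · rfl
      · ext s; simp only [Pi.add_apply, Pi.mul_apply]; ring
      · ring
    have heq : g = fun s => (w s).re ^ 2 + (w s).im ^ 2 := by
      funext s
      rw [hg]
      simp [Complex.sq_norm, Complex.normSq_apply]
      ring
    rw [heq]
    convert h1 using 1
    rw [hg']; ring
  -- FTC on subintervals
  have hftc : ∀ c ∈ Set.Icc (0:ℝ) 1, ∀ d ∈ Set.Icc (0:ℝ) 1, c ≤ d →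
      ∫ t in c..d, g' t = g d - g c := by
    intro c hc d hd hcd
    have hsub : Set.Icc c d ⊆ Set.Icc (0:ℝ) 1 := Set.Icc_subset_Icc hc.1 hd.2
    apply intervalIntegral.integral_eq_sub_of_hasDeriv_right_of_le hcd (hgc.mono hsub)
    · intro t ht
      have ht01 : t ∈ Set.Ioo (0:ℝ) 1 := ⟨lt_of_le_of_lt hc.1 ht.1, lt_of_lt_of_le ht.2 hd.2⟩
      have : HasDerivAt g (g' t) t := by
        apply (hderiv t (Set.Ioo_subset_Icc_self ht01)).hasDerivAt
        exact Icc_mem_nhds ht01.1 ht01.2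
      exact this.hasDerivWithinAt
    · apply ContinuousOn.intervalIntegrable
      apply hg'c.mono
      rw [Set.uIcc_of_le hcd]
      exact hsub
  -- integrability on [0,1]
  have hgint : IntervalIntegrable g volume 0 1 :=
    (hgc.mono (by rw [Set.uIcc_of_le zero_le_one])).intervalIntegrable
  have hhint : IntervalIntegrable h volume 0 1 :=
    (hhc.mono (by rw [Set.uIcc_of_le zero_le_one])).intervalIntegrable
  have hhnn : ∀ t, 0 ≤ h t := fun t => by positivity
  -- min point
  obtain ⟨y₀, hy₀mem, hy₀⟩ := isCompact_Icc.exists_isMinOn (Set.nonempty_Icc.2 zero_le_one)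
    (hgc : ContinuousOn g (Set.Icc (0:ℝ) 1))
  -- g y₀ ≤ ∫ g ≤ ∫ h
  have hmin : g y₀ ≤ ∫ t in (0:ℝ)..1, h t := by
    have h1 : g y₀ = ∫ t in (0:ℝ)..1, g y₀ := by simp
    have h2 : (∫ t in (0:ℝ)..1, g y₀) ≤ ∫ t in (0:ℝ)..1, g t := by
      apply intervalIntegral.integral_mono_on zero_le_one intervalIntegrable_const hgint
      intro t ht
      exact hy₀ ht
    have h3 : (∫ t in (0:ℝ)..1, g t) ≤ ∫ t in (0:ℝ)..1, h t := by
      apply intervalIntegral.integral_mono_on zero_le_one hgint hhint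
      intro t ht
      rw [hh]
      simp only [le_add_iff_nonneg_right]
      exact le_add_of_nonneg_right (by positivity)
    linarith
  -- g x - g y₀ ≤ ∫ h
  have hosc : g x - g y₀ ≤ ∫ t in (0:ℝ)..1, h t := by
    have key : ∀ c ∈ Set.Icc (0:ℝ) 1, ∀ d ∈ Set.Icc (0:ℝ) 1, c ≤ d →
        |g d - g c| ≤ ∫ t in (0:ℝ)..1, h t := by
      intro c hc d hd hcd
      rw [← hftc c hc d hd hcd]
      have hsub : Set.Icc c d ⊆ Set.Icc (0:ℝ) 1 := Set.Icc_subset_Icc hc.1 hd.2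
      have hg'int : IntervalIntegrable g' volume c d := by
        apply ContinuousOn.intervalIntegrable
        apply hg'c.mono; rw [Set.uIcc_of_le hcd]; exact hsub
      have habs : |∫ t in c..d, g' t| ≤ ∫ t in c..d, |g' t| :=
        intervalIntegral.abs_integral_le_integral_abs hcd
      have h1 : (∫ t in c..d, |g' t|) ≤ ∫ t in c..d, h t := by
        apply intervalIntegral.integral_mono_on hcd hg'int.abs
          (hhint.mono_set (by rw [Set.uIcc_of_le hcd, Set.uIcc_of_le zero_le_one]; exact hsub))
        intro t ht
        exact hbound t
      have h2 : (∫ t in c..d, h t) ≤ ∫ t in (0:ℝ)..1, h t := by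
        apply intervalIntegral.integral_mono_interval hc.1 hcd hd.2
        · filter_upwards with t using hhnn t
        · exact hhint
      linarith
    rcases le_total x y₀ with hxy | hxy
    · have := key x hx y₀ hy₀mem hxy
      have := abs_le.mp this
      linarith [this.1]
    · have := key y₀ hy₀mem x hx hxy
      have := abs_le.mp this
      linarith [this.2]
  have : g x ≤ 2 * ∫ t in (0:ℝ)..1, h t := by linarith
  exact this

/-- Property (2.5) of the nonlinearity of the stochastic nonlinear Schrödinger equation:
for `σ ≥ 1` and `u, v : [0,1] → ℂ` continuously differentiable,
`‖f(u) − f(v)‖² ≤ 2^{2σ+1}(4σ−1)²(‖u‖_V^{4σ} + ‖v‖_V^{4σ})‖u − v‖²`,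
where `f(w)(x) = |w(x)|^{2σ}w(x)`, `‖·‖` is the `L²(0,1)`-norm and
`‖w‖_V² = ∫₀¹ |w|² + |w'|² dx` is the squared `H¹(0,1)`-norm. -/
theorem stmt_3 (σ : ℝ) (hσ : 1 ≤ σ) (u v : ℝ → ℂ)
    (hu : ContDiffOn ℝ 1 u (Set.Icc (0:ℝ) 1)) (hv : ContDiffOn ℝ 1 v (Set.Icc (0:ℝ) 1)) :
    (∫ x in (0:ℝ)..1,
        ‖(‖u x‖ ^ (2 * σ) : ℝ) * u x -
          (‖v x‖ ^ (2 * σ) : ℝ) * v x‖ ^ 2) ≤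
      (2:ℝ) ^ (2 * σ + 1) * (4 * σ - 1) ^ 2 *
        ((∫ x in (0:ℝ)..1, ‖u x‖ ^ 2 +
            ‖derivWithin u (Set.Icc (0:ℝ) 1) x‖ ^ 2) ^ (2 * σ) +
         (∫ x in (0:ℝ)..1, ‖v x‖ ^ 2 +
            ‖derivWithin v (Set.Icc (0:ℝ) 1) x‖ ^ 2) ^ (2 * σ)) *
        ∫ x in (0:ℝ)..1, ‖u x - v x‖ ^ 2 := by
  set A : ℝ := ∫ x in (0:ℝ)..1, ‖u x‖ ^ 2 +
      ‖derivWithin u (Set.Icc (0:ℝ) 1) x‖ ^ 2 with hA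
  set B : ℝ := ∫ x in (0:ℝ)..1, ‖v x‖ ^ 2 +
      ‖derivWithin v (Set.Icc (0:ℝ) 1) x‖ ^ 2 with hB
  have hA0 : 0 ≤ A :=
    intervalIntegral.integral_nonneg zero_le_one (fun t _ => by positivity)
  have hB0 : 0 ≤ B :=
    intervalIntegral.integral_nonneg zero_le_one (fun t _ => by positivity)
  have hβ : (1:ℝ) ≤ 2 * σ := by linarith
  set S : ℝ := A ^ (2 * σ) + B ^ (2 * σ) with hS
  have hS0 : 0 ≤ S := by
    apply add_nonneg <;> exact Real.rpow_nonneg (by assumption) _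
  set K : ℝ := (2 * σ + 1) ^ 2 * ((2:ℝ) ^ (2 * σ) * S) with hK
  -- pointwise bound
  have hptbound : ∀ x ∈ Set.Icc (0:ℝ) 1,
      ‖(‖u x‖ ^ (2 * σ) : ℝ) * u x -
          (‖v x‖ ^ (2 * σ) : ℝ) * v x‖ ^ 2
        ≤ K * ‖u x - v x‖ ^ 2 := by
    intro x hx
    set M : ℝ := max (‖u x‖) (‖v x‖) with hM
    have hM0 : 0 ≤ M := le_trans (norm_nonneg _) (le_max_left _ _)
    have hpt := ptwise hβ (u x) (v x)
    have hsq : ‖(‖u x‖ ^ (2 * σ) : ℝ) * u x -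
          (‖v x‖ ^ (2 * σ) : ℝ) * v x‖ ^ 2
        ≤ ((2 * σ + 1) * M ^ (2 * σ) * ‖u x - v x‖) ^ 2 :=
      pow_le_pow_left₀ (norm_nonneg _) hpt 2
    have hMe : (M ^ (2 * σ)) ^ 2 = (M ^ 2) ^ (2 * σ) := by
      rw [← Real.rpow_natCast (M ^ (2 * σ)) 2, ← Real.rpow_natCast M 2,
        ← Real.rpow_mul hM0, ← Real.rpow_mul hM0]
      norm_num [mul_comm]
    have hM2 : (M ^ 2) ^ (2 * σ) ≤ (2:ℝ) ^ (2 * σ) * S := by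
      have hu2 : ‖u x‖ ^ 2 ≤ 2 * A := by
        have := sup_sq_le u hu hx; rw [← hA] at this; exact this
      have hv2 : ‖v x‖ ^ 2 ≤ 2 * B := by
        have := sup_sq_le v hv hx; rw [← hB] at this; exact this
      have h2σ0 : (0:ℝ) ≤ 2 * σ := by linarith
      rcases max_cases (‖u x‖) (‖v x‖) with ⟨hMeq, _⟩ | ⟨hMeq, _⟩
      · have : (M ^ 2) ^ (2 * σ) ≤ (2 * A) ^ (2 * σ) := by
          apply Real.rpow_le_rpow (by positivity) _ h2σ0
          calc M ^ 2 = ‖u x‖ ^ 2 := by rw [hM, hMeq]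
            _ ≤ 2 * A := hu2
        refine this.trans ?_
        rw [Real.mul_rpow (by norm_num) hA0]
        have : (0:ℝ) ≤ (2:ℝ) ^ (2 * σ) * B ^ (2 * σ) := by
          positivity
        rw [hS]; nlinarith [Real.rpow_nonneg hB0 (2*σ), Real.rpow_nonneg (le_of_lt (by norm_num : (0:ℝ)<2)) (2*σ)]
      · have : (M ^ 2) ^ (2 * σ) ≤ (2 * B) ^ (2 * σ) := by
          apply Real.rpow_le_rpow (by positivity) _ h2σ0
          calc M ^ 2 = ‖v x‖ ^ 2 := by rw [hM, hMeq]
            _ ≤ 2 * B := hv2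
        refine this.trans ?_
        rw [Real.mul_rpow (by norm_num) hB0]
        rw [hS]; nlinarith [Real.rpow_nonneg hA0 (2*σ), Real.rpow_nonneg (le_of_lt (by norm_num : (0:ℝ)<2)) (2*σ)]
    calc ‖(‖u x‖ ^ (2 * σ) : ℝ) * u x -
          (‖v x‖ ^ (2 * σ) : ℝ) * v x‖ ^ 2
        ≤ ((2 * σ + 1) * M ^ (2 * σ) * ‖u x - v x‖) ^ 2 := hsq
      _ = (2 * σ + 1) ^ 2 * (M ^ (2 * σ)) ^ 2 * ‖u x - v x‖ ^ 2 := by ring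
      _ ≤ (2 * σ + 1) ^ 2 * ((2:ℝ) ^ (2 * σ) * S) * ‖u x - v x‖ ^ 2 := by
          apply mul_le_mul_of_nonneg_right _ (by positivity)
          apply mul_le_mul_of_nonneg_left _ (by positivity)
          rw [hMe]; exact hM2
      _ = K * ‖u x - v x‖ ^ 2 := by rw [hK]
  -- integrability
  have huc : ContinuousOn u (Set.Icc (0:ℝ) 1) := hu.continuousOn
  have hvc : ContinuousOn v (Set.Icc (0:ℝ) 1) := hv.continuousOn
  have hFc : ContinuousOn (fun x => ‖(‖u x‖ ^ (2 * σ) : ℝ) * u x -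
      (‖v x‖ ^ (2 * σ) : ℝ) * v x‖ ^ 2) (Set.Icc (0:ℝ) 1) := by
    apply ContinuousOn.pow
    apply continuous_norm.comp_continuousOn
    apply ContinuousOn.sub
    · apply ContinuousOn.mul _ huc
      apply Complex.continuous_ofReal.comp_continuousOn
      exact (continuous_norm.comp_continuousOn huc).rpow_const
        (fun x _ => Or.inr (by linarith))
    · apply ContinuousOn.mul _ hvc
      apply Complex.continuous_ofReal.comp_continuousOn
      exact (continuous_norm.comp_continuousOn hvc).rpow_const
        (fun x _ => Or.inr (by linarith))
  have hdc : ContinuousOn (fun x => ‖u x - v x‖ ^ 2) (Set.Icc (0:ℝ) 1) :=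
    (continuous_norm.comp_continuousOn (huc.sub hvc)).pow 2
  have hFint : IntervalIntegrable (fun x => ‖(‖u x‖ ^ (2 * σ) : ℝ) * u x -
      (‖v x‖ ^ (2 * σ) : ℝ) * v x‖ ^ 2) volume 0 1 :=
    (hFc.mono (by rw [Set.uIcc_of_le zero_le_one])).intervalIntegrable
  have hdint : IntervalIntegrable (fun x => ‖u x - v x‖ ^ 2) volume 0 1 :=
    (hdc.mono (by rw [Set.uIcc_of_le zero_le_one])).intervalIntegrable
  have hKdint : IntervalIntegrable (fun x => K * ‖u x - v x‖ ^ 2) volume 0 1 :=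
    hdint.const_mul K
  -- integrate pointwise bound
  have hint : (∫ x in (0:ℝ)..1,
        ‖(‖u x‖ ^ (2 * σ) : ℝ) * u x -
          (‖v x‖ ^ (2 * σ) : ℝ) * v x‖ ^ 2)
      ≤ K * ∫ x in (0:ℝ)..1, ‖u x - v x‖ ^ 2 := by
    rw [← intervalIntegral.integral_const_mul]
    apply intervalIntegral.integral_mono_on zero_le_one hFint hKdint
    intro x hx
    exact hptbound x hx
  refine hint.trans ?_
  -- constant comparison
  have hI0 : 0 ≤ ∫ x in (0:ℝ)..1, ‖u x - v x‖ ^ 2 :=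
    intervalIntegral.integral_nonneg zero_le_one (fun t _ => by positivity)
  have h2pow : (2:ℝ) ^ (2 * σ + 1) = 2 * (2:ℝ) ^ (2 * σ) := by
    rw [Real.rpow_add (by norm_num : (0:ℝ) < 2), Real.rpow_one]; ring
  have hKle : K ≤ (2:ℝ) ^ (2 * σ + 1) * (4 * σ - 1) ^ 2 * S := by
    rw [hK, h2pow]
    have h2σpos : (0:ℝ) < (2:ℝ) ^ (2 * σ) := Real.rpow_pos_of_pos (by norm_num) _
    have hcmp : (2 * σ + 1) ^ 2 ≤ 2 * (4 * σ - 1) ^ 2 := by nlinarith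
    nlinarith [mul_le_mul_of_nonneg_right hcmp (mul_nonneg h2σpos.le hS0)]
  calc K * ∫ x in (0:ℝ)..1, ‖u x - v x‖ ^ 2
      ≤ ((2:ℝ) ^ (2 * σ + 1) * (4 * σ - 1) ^ 2 * S) *
        ∫ x in (0:ℝ)..1, ‖u x - v x‖ ^ 2 :=
        mul_le_mul_of_nonneg_right hKle hI0
    _ = (2:ℝ) ^ (2 * σ + 1) * (4 * σ - 1) ^ 2 * (A ^ (2*σ) + B ^ (2*σ)) *
        ∫ x in (0:ℝ)..1, ‖u x - v x‖ ^ 2 := by rw [hS]
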